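/- The generating function K(z) of Carlitz compositions satisfies K(z) = 1 / (1 - Σ_{j≥1} z^j/(1+z^j)) for |z| < r, where r is the smallest positive root of Σ_{j≥1} r^j/(1+r^j) = 1. -/

import Mathlib

/-- A Carlitz composition: a list of positive parts with no two equal adjacent parts. -/
def IsCarlitz (l : List ℕ) : Prop :=
  (∀ p ∈ l, 0 < p) ∧ l.Chain' (· ≠ ·)

/-- The number of Carlitz compositions of `n`. -/
noncomputable def carlitzCount (n : ℕ) : ℕ :=
  {l : List ℕ | IsCarlitz l ∧ l.sum = n}.ncard

instance (l : List ℕ) : Decidable (l.Chain' (· ≠ ·)) :=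
  inferInstanceAs (Decidable (l.IsChain _))

/-- Finset of compositions (lists of positive naturals) with sum `n`. -/
def comps : ℕ → Finset (List ℕ)
  | 0 => {[]}
  | (n+1) => (Finset.range (n+1)).biUnion
      (fun j => (comps (n - j)).image (List.cons (j+1)))
decreasing_by exact Nat.lt_succ_of_le (Nat.sub_le n j)

theorem mem_comps : ∀ n l, l ∈ comps n ↔ ((∀ p ∈ l, 0 < p) ∧ l.sum = n) := by
  intro n
  induction n using Nat.strong_induction_on with
  | _ n ih =>
    intro l
    match n with
    | 0 =>
      simp only [comps, Finset.mem_singleton]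
      constructor
      · rintro rfl; simp
      · rintro ⟨hp, hs⟩
        cases l with
        | nil => rfl
        | cons a t =>
          exfalso
          have := hp a (by simp)
          simp at hs; omega
    | (n+1) =>
      simp only [comps, Finset.mem_biUnion, Finset.mem_range, Finset.mem_image]
      constructor
      · rintro ⟨j, hj, t, ht, rfl⟩
        rw [ih (n - j) (Nat.lt_succ_of_le (Nat.sub_le n j))] at ht
        obtain ⟨hp, hs⟩ := ht
        refine ⟨?_, ?_⟩
        · intro p hp'
          rcases List.mem_cons.mp hp' with h | h
          · omega
          · exact hp p h
        · simp [hs]; omega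
      · rintro ⟨hp, hs⟩
        cases l with
        | nil => simp at hs
        | cons a t =>
          have ha : 0 < a := hp a (by simp)
          simp only [List.sum_cons] at hs
          refine ⟨a - 1, by omega, t, ?_, by simp; omega⟩
          rw [ih (n - (a-1)) (Nat.lt_succ_of_le (Nat.sub_le n (a-1)))]
          exact ⟨fun p h => hp p (List.mem_cons_of_mem a h), by omega⟩


def KK (n : ℕ) : ℕ := ((comps n).filter (fun l => l.Chain' (· ≠ ·))).card

def CF (n i : ℕ) : Finset (List ℕ) :=
  (comps n).filter (fun l => l.Chain' (· ≠ ·) ∧ l.headI ≠ i)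

def cc (n j : ℕ) : ℕ :=
  ((comps n).filter (fun l => l.Chain' (· ≠ ·) ∧ l.headI = j)).card

theorem headI_ne_iff (j : ℕ) (hj : 1 ≤ j) (t : List ℕ) :
    (∀ y ∈ t.head?, j ≠ y) ↔ t.headI ≠ j := by
  cases t with
  | nil => simp; omega
  | cons a s => simp [eq_comm]

theorem cset_eq_image (n j : ℕ) (hj : 1 ≤ j) (hjn : j ≤ n) :
    (comps n).filter (fun l => l.Chain' (· ≠ ·) ∧ l.headI = j)
      = (CF (n - j) j).image (List.cons j) := by
  ext l
  simp only [Finset.mem_filter, Finset.mem_image, CF, mem_comps]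
  constructor
  · rintro ⟨⟨hpos, hsum⟩, hch, hhead⟩
    cases l with
    | nil => simp at hhead; omega
    | cons a t =>
      simp only [List.headI] at hhead
      rw [hhead] at hch hsum ⊢
      rw [List.Chain', List.isChain_cons] at hch
      refine ⟨t, ⟨⟨fun p hp => hpos p (List.mem_cons_of_mem _ hp), ?_⟩,
        hch.2, (headI_ne_iff j hj t).mp hch.1⟩, rfl⟩
      simp only [List.sum_cons] at hsum; omega
  · rintro ⟨t, ⟨⟨hpos, hsum⟩, hch, hhead⟩, rfl⟩
    refine ⟨⟨?_, ?_⟩, ?_, rfl⟩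
    · intro p hp
      rcases List.mem_cons.mp hp with h | h
      · omega
      · exact hpos p h
    · simp [hsum]; omega
    · rw [List.Chain', List.isChain_cons]
      exact ⟨(headI_ne_iff j hj t).mpr hhead, hch⟩

theorem cc_eq_card_CF (n j : ℕ) (hj : 1 ≤ j) (hjn : j ≤ n) :
    cc n j = (CF (n - j) j).card := by
  rw [cc, cset_eq_image n j hj hjn,
    Finset.card_image_of_injective _ (fun a b h => by injection h)]

theorem KK_split (m j : ℕ) : KK m = cc m j + (CF m j).card := by
  have h := Finset.card_filter_add_card_filter_not
    (s := (comps m).filter (fun l => l.Chain' (· ≠ ·))) (p := fun l => l.headI = j)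
  rw [Finset.filter_filter, Finset.filter_filter] at h
  rw [cc, CF, KK]
  simp only [ne_eq] at h ⊢
  omega

theorem headI_mem_range (n : ℕ) (l : List ℕ) (hl : l ∈ comps n) :
    l.headI ∈ Finset.range (n+1) := by
  rw [mem_comps] at hl
  rcases l with _ | ⟨a, t⟩
  · simp
  · simp only [List.headI, Finset.mem_range]
    have : a ≤ (a :: t).sum := by simp
    omega

theorem CF_card_rec (n i : ℕ) (hn : 1 ≤ n) :
    (CF n i).card = ∑ j ∈ Finset.range (n+1),
      (if 1 ≤ j ∧ j ≠ i then (CF (n-j) j).card else 0) := by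
  rw [CF, Finset.card_eq_sum_card_fiberwise
    (f := fun l => l.headI) (t := Finset.range (n+1))
    (fun l hl => headI_mem_range n l (Finset.mem_filter.mp hl).1)]
  apply Finset.sum_congr rfl
  intro j hj
  rw [Finset.mem_range] at hj
  rw [Finset.filter_filter]
  by_cases h1 : 1 ≤ j ∧ j ≠ i
  · rw [if_pos h1]
    have : (Finset.filter (fun l => (List.Chain' (· ≠ ·) l ∧ l.headI ≠ i) ∧ l.headI = j)
        (comps n)) = (comps n).filter (fun l => l.Chain' (· ≠ ·) ∧ l.headI = j) := by
      apply Finset.filter_congr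
      intro l _
      constructor
      · tauto
      · rintro ⟨hc, hh⟩; exact ⟨⟨hc, by rw [hh]; exact h1.2⟩, hh⟩
    rw [this, cset_eq_image n j h1.1 (by omega),
      Finset.card_image_of_injective _ (fun a b h => by injection h)]
  · rw [if_neg h1]
    rw [Finset.card_eq_zero, Finset.filter_eq_empty_iff]
    intro l hl
    rintro ⟨⟨hc, hhi⟩, hhj⟩
    rw [not_and_or] at h1
    rcases h1 with h1 | h1
    · -- j = 0, but l nonempty with positive parts
      have hj0 : j = 0 := by omega
      rw [mem_comps] at hl
      rcases l with _ | ⟨a, t⟩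
      · simp at hl; omega
      · have := hl.1 a (by simp)
        simp only [List.headI] at hhj
        omega
    · exact hhi (by rw [hhj]; omega)

theorem KK_fiber (n : ℕ) (hn : 1 ≤ n) :
    KK n = ∑ j ∈ Finset.range (n+1), cc n j := by
  rw [KK, Finset.card_eq_sum_card_fiberwise
    (f := fun l => l.headI) (t := Finset.range (n+1))
    (fun l hl => headI_mem_range n l (Finset.mem_filter.mp hl).1)]
  apply Finset.sum_congr rfl
  intro j hj
  rw [cc, Finset.filter_filter]

theorem cc_rec (n j : ℕ) (hj : 1 ≤ j) (hjn : j ≤ n) :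
    cc n j + cc (n - j) j = KK (n - j) := by
  rw [cc_eq_card_CF n j hj hjn, KK_split (n-j) j]
  omega

theorem cc_eq_zero (n j : ℕ) (h : n < j) : cc n j = 0 := by
  rw [cc, Finset.card_eq_zero, Finset.filter_eq_empty_iff]
  intro l hl
  rintro ⟨hc, hh⟩
  have := headI_mem_range n l hl
  rw [Finset.mem_range, hh] at this
  omega

theorem cc_le_KK (n j : ℕ) : cc n j ≤ KK n := by
  rw [cc, KK]
  apply Finset.card_le_card
  intro l hl
  rw [Finset.mem_filter] at hl ⊢
  exact ⟨hl.1, hl.2.1⟩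

theorem comps_zero : comps 0 = {[]} := by rw [comps]

theorem KK_zero : KK 0 = 1 := by
  rw [KK, comps_zero, Finset.filter_singleton, if_pos (c := List.Chain' (fun x1 x2 : ℕ => x1 ≠ x2) []) List.isChain_nil]
  simp

theorem CF_zero (i : ℕ) (hi : 1 ≤ i) : (CF 0 i).card = 1 := by
  rw [CF, comps_zero, Finset.filter_singleton, if_pos]
  · simp
  · exact ⟨List.isChain_nil, by simp; omega⟩

theorem cc_head_zero (n : ℕ) (hn : 1 ≤ n) : cc n 0 = 0 := by
  rw [cc, Finset.card_eq_zero, Finset.filter_eq_empty_iff]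
  intro l hl
  rintro ⟨hc, hh⟩
  rw [mem_comps] at hl
  rcases l with _ | ⟨a, t⟩
  · simp at hl; omega
  · have := hl.1 a (by simp)
    simp only [List.headI] at hh
    omega

theorem KK_fiber' (n : ℕ) (hn : 1 ≤ n) :
    KK n = ∑ j ∈ Finset.range (n+1), cc n (j+1) := by
  rw [KK_fiber n hn, Finset.sum_range_succ', Finset.sum_range_succ,
    cc_head_zero n hn, cc_eq_zero n (n+1) (by omega)]

theorem carlitzCount_eq (n : ℕ) : carlitzCount n = KK n := by
  rw [carlitzCount, KK]
  have hset : {l : List ℕ | IsCarlitz l ∧ l.sum = n}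
      = ↑((comps n).filter (fun l => l.Chain' (· ≠ ·))) := by
    ext l
    simp only [Set.mem_setOf_eq, Finset.coe_filter, IsCarlitz, mem_comps]
    tauto
  rw [hset, Set.ncard_coe_finset]
section Bound

variable (r : ℝ) (hr0 : 0 < r) (hr1 : r < 1)
  (hsum : Summable (fun j : ℕ => r ^ (j + 1) / (1 + r ^ (j + 1))))
  (htsum : ∑' j : ℕ, r ^ (j + 1) / (1 + r ^ (j + 1)) = 1)

include hr0 hr1 in
theorem one_add_pow_pos (j : ℕ) : (0:ℝ) < 1 + r ^ j :=
  lt_of_lt_of_le one_pos (by nlinarith [pow_pos hr0 j])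

include hr0 hr1 hsum htsum in
theorem sum_p_le (s : Finset ℕ) (hs : ∀ j ∈ s, 1 ≤ j) :
    ∑ j ∈ s, r ^ j / (1 + r ^ j) ≤ 1 := by
  have key : ∑ j ∈ s, r ^ j / (1 + r ^ j)
      = ∑ m ∈ s.image (· - 1), r ^ (m+1) / (1 + r ^ (m+1)) := by
    rw [Finset.sum_image]
    · apply Finset.sum_congr rfl
      intro j hj
      have h1 := hs j hj
      have h2 : j - 1 + 1 = j := by omega
      rw [h2]
    · intro a ha b hb hab
      have := hs a ha; have := hs b hb; simp only at hab; omega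
  rw [key]
  exact le_trans (Summable.sum_le_tsum _ (fun m _ => by positivity) hsum) (le_of_eq htsum)

include hr0 hr1 hsum htsum in
theorem CF_bound : ∀ n, ∀ i, 1 ≤ i →
    ((CF n i).card : ℝ) * r ^ n ≤ 2 * (1 - r ^ i / (1 + r ^ i)) := by
  intro n
  induction n using Nat.strong_induction_on with
  | _ n ih =>
    intro i hi
    have hpos := one_add_pow_pos r hr0 hr1 i
    have hple : r ^ i / (1 + r ^ i) ≤ 1 / 2 := by
      rw [div_le_div_iff₀ hpos two_pos]
      have : r ^ i ≤ 1 := le_of_lt (pow_lt_one₀ (le_of_lt hr0) hr1 (by omega))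
      nlinarith
    rcases Nat.eq_zero_or_pos n with rfl | hn
    · rw [CF_zero i hi]
      push_cast
      nlinarith
    · rw [CF_card_rec n i hn, ← Finset.sum_filter]
      push_cast
      rw [Finset.sum_mul]
      have hstep : ∀ j ∈ (Finset.range (n+1)).filter (fun j => 1 ≤ j ∧ j ≠ i),
          ((CF (n-j) j).card : ℝ) * r ^ n ≤ 2 * (r ^ j / (1 + r ^ j)) := by
        intro j hj
        rw [Finset.mem_filter, Finset.mem_range] at hj
        obtain ⟨hjn, hj1, hji⟩ := hj
        have hrw : r ^ n = r ^ (n - j) * r ^ j := by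
          rw [← pow_add]; congr 1; omega
        have h1 := ih (n - j) (by omega) j hj1
        have hposj := one_add_pow_pos r hr0 hr1 j
        have : 2 * (1 - r ^ j / (1 + r ^ j)) * r ^ j = 2 * (r^j / (1 + r^j)) * 1 := by
          field_simp
          ring
        rw [hrw, ← mul_assoc]
        calc ((CF (n-j) j).card : ℝ) * r ^ (n-j) * r ^ j
            ≤ 2 * (1 - r ^ j / (1 + r ^ j)) * r ^ j := by
              apply mul_le_mul_of_nonneg_right h1 (by positivity)
          _ = 2 * (r ^ j / (1 + r ^ j)) := by rw [this]; ring
      calc (∑ j ∈ (Finset.range (n+1)).filter (fun j => 1 ≤ j ∧ j ≠ i),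
              ((CF (n-j) j).card : ℝ) * r ^ n)
          ≤ ∑ j ∈ (Finset.range (n+1)).filter (fun j => 1 ≤ j ∧ j ≠ i),
              2 * (r ^ j / (1 + r ^ j)) := Finset.sum_le_sum hstep
        _ = 2 * ∑ j ∈ (Finset.range (n+1)).filter (fun j => 1 ≤ j ∧ j ≠ i),
              r ^ j / (1 + r ^ j) := by rw [Finset.mul_sum]
        _ ≤ 2 * (1 - r ^ i / (1 + r ^ i)) := by
            have hins : r ^ i / (1 + r ^ i) +
                (∑ j ∈ (Finset.range (n+1)).filter (fun j => 1 ≤ j ∧ j ≠ i),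
                  r ^ j / (1 + r ^ j)) ≤ 1 := by
              have : ∑ j ∈ insert i ((Finset.range (n+1)).filter (fun j => 1 ≤ j ∧ j ≠ i)),
                  r ^ j / (1 + r ^ j) ≤ 1 := by
                apply sum_p_le r hr0 hr1 hsum htsum
                intro j hj
                rcases Finset.mem_insert.mp hj with rfl | hj
                · exact hi
                · exact ((Finset.mem_filter.mp hj).2).1
              rwa [Finset.sum_insert (by simp)] at this
            linarith

end Bound

section B2
variable (r : ℝ) (hr0 : 0 < r) (hr1 : r < 1)
  (hsum : Summable (fun j : ℕ => r ^ (j + 1) / (1 + r ^ (j + 1))))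
  (htsum : ∑' j : ℕ, r ^ (j + 1) / (1 + r ^ (j + 1)) = 1)

include hr0 hr1 hsum htsum in
theorem KK_bound (n : ℕ) : (KK n : ℝ) * r ^ n ≤ 2 := by
  rcases Nat.eq_zero_or_pos n with rfl | hn
  · rw [KK_zero]; norm_num
  · rw [KK_fiber n hn]
    push_cast
    rw [Finset.sum_mul]
    have hstep : ∀ j ∈ Finset.range (n+1),
        (cc n j : ℝ) * r ^ n ≤ if 1 ≤ j then 2 * (r ^ j / (1 + r ^ j)) else 0 := by
      intro j hj
      rw [Finset.mem_range] at hj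
      rcases Nat.eq_zero_or_pos j with rfl | hj1
      · rw [if_neg (by omega : ¬ 1 ≤ 0), cc_head_zero n hn]
        simp
      · rw [if_pos (by omega : 1 ≤ j), cc_eq_card_CF n j hj1 (by omega)]
        have h1 := CF_bound r hr0 hr1 hsum htsum (n - j) j hj1
        have hposj := one_add_pow_pos r hr0 hr1 j
        have hrw : r ^ n = r ^ (n - j) * r ^ j := by
          rw [← pow_add]; congr 1; omega
        have key : 2 * (1 - r ^ j / (1 + r ^ j)) * r ^ j = 2 * (r^j / (1 + r^j)) := by
          field_simp
          ring
        rw [hrw, ← mul_assoc, ← key]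
        apply mul_le_mul_of_nonneg_right h1 (by positivity)
    calc ∑ j ∈ Finset.range (n+1), (cc n j : ℝ) * r ^ n
        ≤ ∑ j ∈ Finset.range (n+1), (if 1 ≤ j then 2 * (r ^ j / (1 + r ^ j)) else 0) :=
          Finset.sum_le_sum hstep
      _ = 2 * ∑ j ∈ (Finset.range (n+1)).filter (fun j => 1 ≤ j), r ^ j / (1 + r ^ j) := by
          rw [Finset.sum_filter, Finset.mul_sum]
          apply Finset.sum_congr rfl
          intro j _
          split <;> simp
      _ ≤ 2 * 1 := by
          have := sum_p_le r hr0 hr1 hsum htsum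
            ((Finset.range (n+1)).filter (fun j => 1 ≤ j))
            (fun j hj => (Finset.mem_filter.mp hj).2)
          linarith
      _ = 2 := by norm_num
end B2
theorem main (r : ℝ) (hr0 : 0 < r)
    (hroot : ∑' j : ℕ, r ^ (j + 1) / (1 + r ^ (j + 1)) = 1) :
    ∀ x : ℝ, |x| < r →
      (∑' n : ℕ, ((KK n : ℝ)) * x ^ n)
        = 1 / (1 - ∑' j : ℕ, x ^ (j + 1) / (1 + x ^ (j + 1))) := by
  -- summability of the root series
  have hsum : Summable (fun j : ℕ => r ^ (j + 1) / (1 + r ^ (j + 1))) := by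
    by_contra h
    rw [tsum_eq_zero_of_not_summable h] at hroot
    norm_num at hroot
  -- r < 1
  have hr1 : r < 1 := by
    by_contra h
    push_neg at h
    have htend := hsum.tendsto_atTop_zero
    have hev : ∀ n : ℕ, (1:ℝ)/2 ≤ r ^ (n + 1) / (1 + r ^ (n + 1)) := by
      intro n
      have hu : (1:ℝ) ≤ r ^ (n+1) := one_le_pow₀ h
      have hpos : (0:ℝ) < 1 + r ^ (n+1) := by linarith
      rw [div_le_div_iff₀ two_pos hpos]
      linarith
    have := ge_of_tendsto htend (Filter.Eventually.of_forall hev)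
    norm_num at this
  intro x hx
  have hxr : |x| < r := hx
  have hxlt1 : |x| < 1 := lt_trans hxr hr1
  -- summability of K-series (absolute)
  have hKabs : Summable (fun n : ℕ => (KK n : ℝ) * |x| ^ n) := by
    apply Summable.of_nonneg_of_le (fun n => by positivity)
      (fun n => ?_) ((summable_geometric_of_lt_one (r := |x|/r) (by positivity)
        (by rw [div_lt_one hr0]; exact hxr)).mul_left 2)
    have h1 := KK_bound r hr0 hr1 hsum hroot n
    have h2 : (0:ℝ) < r ^ n := pow_pos hr0 n
    calc (KK n : ℝ) * |x| ^ n = ((KK n : ℝ) * r ^ n) * (|x| / r) ^ n := by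
          rw [div_pow, mul_comm ((KK n : ℝ)) _]
          field_simp
      _ ≤ 2 * (|x| / r) ^ n := by
          apply mul_le_mul_of_nonneg_right h1 (by positivity)
  have hK : Summable (fun n : ℕ => (KK n : ℝ) * x ^ n) := by
    apply Summable.of_abs
    have : ∀ n, |(KK n : ℝ) * x ^ n| = (KK n : ℝ) * |x| ^ n := by
      intro n
      rw [abs_mul, abs_pow, Nat.abs_cast]
    rw [funext this]
    exact hKabs
  set Kx : ℝ := ∑' n : ℕ, (KK n : ℝ) * x ^ n with hKx
  -- summability of cc series for fixed j
  have hcabs : ∀ j : ℕ, Summable (fun n : ℕ => (cc n j : ℝ) * |x| ^ n) := by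
    intro j
    apply Summable.of_nonneg_of_le (fun n => by positivity) (fun n => ?_) hKabs
    have := cc_le_KK n j
    apply mul_le_mul_of_nonneg_right _ (by positivity)
    exact_mod_cast this
  have hc : ∀ j : ℕ, Summable (fun n : ℕ => (cc n j : ℝ) * x ^ n) := by
    intro j
    apply Summable.of_abs
    have : ∀ n, |(cc n j : ℝ) * x ^ n| = (cc n j : ℝ) * |x| ^ n := by
      intro n
      rw [abs_mul, abs_pow, Nat.abs_cast]
    rw [funext this]
    exact hcabs j
  -- per-j functional equation
  have hCj : ∀ j : ℕ, 1 ≤ j →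
      (∑' n : ℕ, (cc n j : ℝ) * x ^ n) = x ^ j / (1 + x ^ j) * Kx := by
    intro j hj
    have hxj : |x ^ j| < 1 := by
      rw [abs_pow]
      exact pow_lt_one₀ (abs_nonneg x) hxlt1 (by omega)
    have hden : (0:ℝ) < 1 + x ^ j := by
      have := abs_lt.mp hxj
      linarith [this.1]
    -- shift the sum
    have hshift : (∑' n : ℕ, (cc n j : ℝ) * x ^ n)
        = ∑' m : ℕ, (cc (m + j) j : ℝ) * x ^ (m + j) := by
      symm
      apply Function.Injective.tsum_eq (g := fun m : ℕ => m + j)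
        (f := fun n => (cc n j : ℝ) * x ^ n)
      · intro a b hab; simp only [] at hab; omega
      · intro n hn
        rcases lt_or_ge n j with h | h
        · exfalso
          apply hn
          simp [cc_eq_zero n j h]
        · exact ⟨n - j, by simp only []; omega⟩
    have hterm : ∀ m : ℕ, (cc (m + j) j : ℝ) * x ^ (m + j)
        = ((KK m : ℝ) * x ^ m - (cc m j : ℝ) * x ^ m) * x ^ j := by
      intro m
      have h1 := cc_rec (m + j) j hj (by omega)
      rw [Nat.add_sub_cancel] at h1
      have : (cc (m+j) j : ℝ) = (KK m : ℝ) - (cc m j : ℝ) := by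
        have := congrArg (Nat.cast (R := ℝ)) h1
        push_cast at this
        linarith
      rw [this, pow_add]
      ring
    have heq : (∑' n : ℕ, (cc n j : ℝ) * x ^ n)
        = (Kx - ∑' n : ℕ, (cc n j : ℝ) * x ^ n) * x ^ j := by
      calc (∑' n : ℕ, (cc n j : ℝ) * x ^ n)
          = ∑' m : ℕ, (cc (m + j) j : ℝ) * x ^ (m + j) := hshift
        _ = ∑' m : ℕ, ((KK m : ℝ) * x ^ m - (cc m j : ℝ) * x ^ m) * x ^ j :=
            tsum_congr (fun m => hterm m)
        _ = (∑' m : ℕ, ((KK m : ℝ) * x ^ m - (cc m j : ℝ) * x ^ m)) * x ^ j :=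
            tsum_mul_right
        _ = (Kx - ∑' n : ℕ, (cc n j : ℝ) * x ^ n) * x ^ j := by
            rw [Summable.tsum_sub hK (hc j), ← hKx]
    rw [div_mul_eq_mul_div, eq_div_iff (ne_of_gt hden)]
    linear_combination heq
  -- double sum: summability over the product
  have habs_eq : ∀ p : ℕ × ℕ, |(cc p.1 (p.2+1) : ℝ) * x ^ p.1|
      = (cc p.1 (p.2+1) : ℝ) * |x| ^ p.1 := by
    intro p
    rw [abs_mul, abs_pow, Nat.abs_cast]
  have hfinsum : ∀ n : ℕ, ∀ (z : ℝ), ∑' j : ℕ, (cc n (j+1) : ℝ) * z ^ n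
      = (∑ j ∈ Finset.range (n+1), (cc n (j+1) : ℝ)) * z ^ n := by
    intro n z
    rw [tsum_eq_sum (s := Finset.range (n+1)), Finset.sum_mul]
    intro j hj
    rw [Finset.mem_range] at hj
    rw [cc_eq_zero n (j+1) (by omega)]
    simp
  have hrange : ∀ n : ℕ, (∑ j ∈ Finset.range (n+1), (cc n (j+1) : ℝ))
      = (KK n : ℝ) - (if n = 0 then 1 else 0) := by
    intro n
    rcases Nat.eq_zero_or_pos n with rfl | hn
    · simp [cc_eq_zero 0 1 (by omega), KK_zero]
    · rw [if_neg (by omega), KK_fiber' n hn]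
      push_cast
      ring
  have hg : Summable (fun p : ℕ × ℕ => (cc p.1 (p.2+1) : ℝ) * |x| ^ p.1) := by
    rw [summable_prod_of_nonneg (fun p => by positivity)]
    constructor
    · intro n
      apply summable_of_ne_finset_zero (s := Finset.range (n+1))
      intro j hj
      rw [Finset.mem_range] at hj
      rw [cc_eq_zero n (j+1) (by omega)]
      simp
    · apply Summable.of_nonneg_of_le (fun n => ?_) (fun n => ?_) hKabs
      · apply tsum_nonneg
        intro j
        positivity
      · rw [hfinsum n |x|, hrange n]
        apply mul_le_mul_of_nonneg_right _ (by positivity)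
        split <;> simp
  have hF : Summable (fun p : ℕ × ℕ => (cc p.1 (p.2+1) : ℝ) * x ^ p.1) := by
    apply Summable.of_abs
    rw [funext habs_eq]
    exact hg
  -- swap the order of summation
  have hswap : ∑' n : ℕ, ∑' j : ℕ, (cc n (j+1) : ℝ) * x ^ n
      = ∑' j : ℕ, ∑' n : ℕ, (cc n (j+1) : ℝ) * x ^ n := by
    exact (Summable.tsum_comm (f := fun n j => (cc n (j+1) : ℝ) * x ^ n) hF).symm
  -- evaluate both sides of the swap
  have hind : Summable (fun n : ℕ => (if n = 0 then (1:ℝ) else 0)) := by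
    apply summable_of_ne_finset_zero (s := {0})
    intro n hn
    simp at hn
    simp [hn]
  have hlhs : ∑' n : ℕ, ∑' j : ℕ, (cc n (j+1) : ℝ) * x ^ n = Kx - 1 := by
    have : (fun n : ℕ => ∑' j : ℕ, (cc n (j+1) : ℝ) * x ^ n)
        = fun n : ℕ => (KK n : ℝ) * x ^ n - (if n = 0 then (1:ℝ) else 0) := by
      funext n
      rw [hfinsum n x, hrange n]
      rcases Nat.eq_zero_or_pos n with rfl | hn
      · simp [KK_zero]
      · rw [if_neg (by omega)]
        ring
    rw [this, Summable.tsum_sub hK hind, ← hKx]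
    congr 1
    exact tsum_ite_eq 0 1
  have hrhs : ∑' j : ℕ, ∑' n : ℕ, (cc n (j+1) : ℝ) * x ^ n
      = (∑' j : ℕ, x ^ (j + 1) / (1 + x ^ (j + 1))) * Kx := by
    rw [← tsum_mul_right]
    apply tsum_congr
    intro j
    exact hCj (j+1) (by omega)
  have hmain : Kx - 1 = (∑' j : ℕ, x ^ (j + 1) / (1 + x ^ (j + 1))) * Kx := by
    rw [← hlhs, hswap, hrhs]
  set F := ∑' j : ℕ, x ^ (j + 1) / (1 + x ^ (j + 1)) with hFdef
  have hone : Kx * (1 - F) = 1 := by linear_combination hmain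
  exact eq_one_div_of_mul_eq_one_left hone

/-- `K(z) = 1 / (1 - Σ_{j≥1} z^j/(1+z^j))` for `|z| < r`, where `r` is the
smallest positive root of `Σ_{j≥1} r^j/(1+r^j) = 1`. -/
theorem carlitz_gf (r : ℝ) (hr0 : 0 < r)
    (hroot : ∑' j : ℕ, r ^ (j + 1) / (1 + r ^ (j + 1)) = 1)
    (hmin : ∀ y : ℝ, 0 < y → (∑' j : ℕ, y ^ (j + 1) / (1 + y ^ (j + 1))) = 1 → r ≤ y) :
    ∀ x : ℝ, |x| < r →
      (∑' n : ℕ, (carlitzCount n : ℝ) * x ^ n)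
        = 1 / (1 - ∑' j : ℕ, x ^ (j + 1) / (1 + x ^ (j + 1))) := by
  intro x hx
  have h := main r hr0 hroot x hx
  rw [← h]
  apply tsum_congr
  intro n
  rw [carlitzCount_eq]
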